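/- Let (X,d,⪯) be an ordered metric space and E an O̅-complete subset of X. Let T, S be self-maps of X with T(X) ⊆ E ⊆ S(X) and T S-increasing. Suppose there exists a continuous half-comparison function ρ such that d(Tx,Ty) ≤ ρ(max{d(Sx,Sy), d(Sx,Tx), d(Sy,Ty), d(Sx,Ty), d(Sy,Tx)}) for all x, y ∈ X with Sx ⪯ Sy. Assume: there exists x₀ ∈ X with Sx₀ ⪯ Tx₀; T is (S,O̅)-continuous; (T,S) is weakly compatible; C(T,S) is totally ordered by ⪯; and at least one of T, S is a comparable mapping. Then (T,S) has a unique common fixed point, and for any such x₀ every T-S-sequence {Txₙ} with initial point x₀ converges to it. -/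
import Mathlib


open Filter Topology

/-- A comparison function: `φ : [0,∞) → [0,∞)` increasing with `φ^[n] t → 0` for all `t > 0`. -/
def IsComparisonFn (φ : ℝ → ℝ) : Prop :=
  (∀ t, 0 ≤ t → 0 ≤ φ t) ∧
  (∀ s t, 0 ≤ s → s ≤ t → φ s ≤ φ t) ∧
  (∀ t, 0 < t → Tendsto (fun n => φ^[n] t) atTop (𝓝 0))

/-- A half-comparison function: a comparison function `ρ` such that `t ↦ ρ (2 t)`
is also a comparison function. -/
def IsHalfComparisonFn (ρ : ℝ → ℝ) : Prop :=
  IsComparisonFn ρ ∧ IsComparisonFn (fun t => ρ (2 * t))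

/-- Two elements are comparable in a preorder. -/
def CmpRel {X : Type*} [Preorder X] (a b : X) : Prop := a ≤ b ∨ b ≤ a

/-- `T` is `S`-increasing. -/
def SIncreasing {X : Type*} [Preorder X] (T S : X → X) : Prop :=
  ∀ x y, S x ≤ S y → T x ≤ T y

/-- `E` is `O̅`-complete: every increasing Cauchy sequence in `E` converges in `E`. -/
def OBarComplete {X : Type*} [MetricSpace X] [Preorder X] (E : Set X) : Prop :=
  ∀ u : ℕ → X, (∀ n, u n ∈ E) → Monotone u → CauchySeq u → ∃ z ∈ E, Tendsto u atTop (𝓝 z)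

/-- `(E,d,⪯)` is I-regular relative to `S`: every increasing sequence `{S xₙ}` in `E`
converging to some `S z` admits a subsequence whose terms are all comparable with `S z`,
and moreover `S z ⪯ S (S z)`. -/
def IRegularOn {X : Type*} [MetricSpace X] [Preorder X] (E : Set X) (S : X → X) : Prop :=
  ∀ (x : ℕ → X) (z : X), (∀ n, S (x n) ∈ E) → Monotone (fun n => S (x n)) →
    Tendsto (fun n => S (x n)) atTop (𝓝 (S z)) →
    ((∃ k : ℕ → ℕ, StrictMono k ∧ ∀ n, CmpRel (S (x (k n))) (S z)) ∧ S z ≤ S (S z))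

/-- The pair `(T,S)` is weakly compatible. -/
def WeaklyCompatible {X : Type*} (T S : X → X) : Prop :=
  ∀ x, S x = T x → S (T x) = T (S x)

/-- The set of coincidence points `C(T,S)` is `(T,S)`-directed. -/
def CoincTSDirected {X : Type*} [Preorder X] (T S : X → X) : Prop :=
  ∀ x y, S x = T x → S y = T y → ∃ z, CmpRel (T x) (S z) ∧ CmpRel (T y) (S z)

/-- The set of coincidence points `C(T,S)` is totally ordered by `⪯`. -/
def CoincTotallyOrdered {X : Type*} [Preorder X] (T S : X → X) : Prop :=
  ∀ x y, S x = T x → S y = T y → CmpRel x y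

/-- `T` is `(S,O̅)`-continuous. -/
def SOBarContinuous {X : Type*} [MetricSpace X] [Preorder X] (T S : X → X) : Prop :=
  ∀ (x : ℕ → X) (a : X), Monotone (fun n => S (x n)) →
    Tendsto (fun n => S (x n)) atTop (𝓝 (S a)) →
    Tendsto (fun n => T (x n)) atTop (𝓝 (T a))

/-- A self-map `f` is `O̅`-continuous. -/
def OBarContinuous {X : Type*} [MetricSpace X] [Preorder X] (f : X → X) : Prop :=
  ∀ (x : ℕ → X) (a : X), Monotone x → Tendsto x atTop (𝓝 a) →
    Tendsto (fun n => f (x n)) atTop (𝓝 (f a))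

/-- The pair `(T,S)` is `O̅`-compatible. -/
def OBarCompatible {X : Type*} [MetricSpace X] [Preorder X] (T S : X → X) : Prop :=
  ∀ (x : ℕ → X) (z : X), Monotone (fun n => S (x n)) → Monotone (fun n => T (x n)) →
    Tendsto (fun n => S (x n)) atTop (𝓝 z) → Tendsto (fun n => T (x n)) atTop (𝓝 z) →
    Tendsto (fun n => dist (S (T (x n))) (T (S (x n)))) atTop (𝓝 0)

/-- A comparable mapping maps comparable elements to comparable elements. -/
def ComparableMap {X : Type*} [Preorder X] (f : X → X) : Prop :=
  ∀ x y, CmpRel x y → CmpRel (f x) (f y)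

/-- Continuity of a 6-variable function on `[0,∞)⁶`. -/
def ContOnNonneg6 (F : ℝ → ℝ → ℝ → ℝ → ℝ → ℝ → ℝ) : Prop :=
  ContinuousOn
    (fun p : ℝ × ℝ × ℝ × ℝ × ℝ × ℝ => F p.1 p.2.1 p.2.2.1 p.2.2.2.1 p.2.2.2.2.1 p.2.2.2.2.2)
    (Set.Ici 0 ×ˢ Set.Ici 0 ×ˢ Set.Ici 0 ×ˢ Set.Ici 0 ×ˢ Set.Ici 0 ×ˢ Set.Ici 0)

/-- Condition (F1a): `F` is decreasing in the fifth variable and there is a comparison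
function `φ` such that `F(u,v,v,u,u+v,0) ≤ 0` implies `u ≤ φ v` for `u, v ≥ 0`. -/
def CondF1a (F : ℝ → ℝ → ℝ → ℝ → ℝ → ℝ → ℝ) : Prop :=
  (∀ t1 t2 t3 t4 t6, 0 ≤ t1 → 0 ≤ t2 → 0 ≤ t3 → 0 ≤ t4 → 0 ≤ t6 →
      AntitoneOn (fun t5 => F t1 t2 t3 t4 t5 t6) (Set.Ici 0)) ∧
  (∃ φ, IsComparisonFn φ ∧ ∀ u v, 0 ≤ u → 0 ≤ v → F u v v u (u + v) 0 ≤ 0 → u ≤ φ v)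

/-- Condition (F1b): `F` is decreasing in the fourth variable and there is a comparison
function `φ` such that `F(u,v,0,u+v,u,v) ≤ 0` implies `u ≤ φ v` for `u, v ≥ 0`. -/
def CondF1b (F : ℝ → ℝ → ℝ → ℝ → ℝ → ℝ → ℝ) : Prop :=
  (∀ t1 t2 t3 t5 t6, 0 ≤ t1 → 0 ≤ t2 → 0 ≤ t3 → 0 ≤ t5 → 0 ≤ t6 →
      AntitoneOn (fun t4 => F t1 t2 t3 t4 t5 t6) (Set.Ici 0)) ∧
  (∃ φ, IsComparisonFn φ ∧ ∀ u v, 0 ≤ u → 0 ≤ v → F u v 0 (u + v) u v ≤ 0 → u ≤ φ v)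

/-- Condition (F1c): `F` is decreasing in the third variable and there is a comparison
function `φ` such that `F(u,v,u+v,0,v,u) ≤ 0` implies `u ≤ φ v` for `u, v ≥ 0`. -/
def CondF1c (F : ℝ → ℝ → ℝ → ℝ → ℝ → ℝ → ℝ) : Prop :=
  (∀ t1 t2 t4 t5 t6, 0 ≤ t1 → 0 ≤ t2 → 0 ≤ t4 → 0 ≤ t5 → 0 ≤ t6 →
      AntitoneOn (fun t3 => F t1 t2 t3 t4 t5 t6) (Set.Ici 0)) ∧
  (∃ φ, IsComparisonFn φ ∧ ∀ u v, 0 ≤ u → 0 ≤ v → F u v (u + v) 0 v u ≤ 0 → u ≤ φ v)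

/-- Condition (F2): `F(u,u,0,0,u,u) > 0` for all `u > 0`. -/
def CondF2 (F : ℝ → ℝ → ℝ → ℝ → ℝ → ℝ → ℝ) : Prop :=
  ∀ u, 0 < u → 0 < F u u 0 0 u u



private lemma compFn_lt' {φ : ℝ → ℝ} (h : IsComparisonFn φ) {t : ℝ} (ht : 0 < t) : φ t < t := by
  by_contra hc
  push_neg at hc
  have key : ∀ n, t ≤ φ^[n] t := by
    intro n
    induction n with
    | zero => simp
    | succ n ih =>
      rw [Function.iterate_succ_apply']
      exact hc.trans (h.2.1 t _ ht.le ih)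
  have := ge_of_tendsto (h.2.2 t ht) (Filter.Eventually.of_forall key)
  linarith

private lemma compFn_zero' {φ : ℝ → ℝ} (h : IsComparisonFn φ) : φ 0 = 0 := by
  rcases eq_or_lt_of_le (h.1 0 le_rfl) with h0 | h0
  · exact h0.symm
  · have h1 := compFn_lt' h h0
    have h2 := h.2.1 0 (φ 0) le_rfl (h.1 0 le_rfl)
    linarith

private lemma compFn_dist_zero' {φ : ℝ → ℝ} (h : IsComparisonFn φ) {D : ℝ} (hD : 0 ≤ D)
    (hle : D ≤ φ D) : D = 0 := by
  rcases eq_or_lt_of_le hD with h0 | h0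
  · exact h0.symm
  · exact absurd (hle.trans_lt (compFn_lt' h h0)) (lt_irrefl D)

private lemma compFn_seq_tendsto' {φ : ℝ → ℝ} (h : IsComparisonFn φ) (u : ℕ → ℝ)
    (hu0 : ∀ n, 0 ≤ u n) (hu : ∀ n, u (n + 1) ≤ φ (u n)) :
    Tendsto u atTop (𝓝 0) := by
  have hiter : ∀ n, u n ≤ φ^[n] (u 0) := by
    intro n
    induction n with
    | zero => simp
    | succ n ih =>
      rw [Function.iterate_succ_apply']
      exact (hu n).trans (h.2.1 _ _ (hu0 n) ih)
  rcases eq_or_lt_of_le (hu0 0) with h0 | h0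
  · have hz : ∀ n, φ^[n] (u 0) = 0 := by
      intro n
      induction n with
      | zero => exact h0.symm
      | succ n ih => rw [Function.iterate_succ_apply', ih, compFn_zero' h]
    have : u = fun _ => 0 := funext fun n => le_antisymm ((hiter n).trans_eq (hz n)) (hu0 n)
    rw [this]; exact tendsto_const_nhds
  · exact squeeze_zero hu0 hiter (h.2.2 _ h0)

private lemma max_pattern' (d : ℝ) (hd : 0 ≤ d) :
    max d (max 0 (max 0 (max d d))) = d := by
  simp [max_self, max_eq_right hd]


/-- order-theoretic quasi-contraction corollary, `(S,O̅)`-continuity case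
(Corollary 3.9, second alternative). -/
theorem quasicontraction_ordered_SOBar {X : Type*} [MetricSpace X] [PartialOrder X]
    (E : Set X) (T S : X → X)
    (hTE : ∀ x, T x ∈ E) (hES : E ⊆ Set.range S) (hTS : SIncreasing T S)
    (ρ : ℝ → ℝ) (hρ : IsHalfComparisonFn ρ) (hρc : ContinuousOn ρ (Set.Ici 0))
    (hcontr : ∀ x y, S x ≤ S y →
      dist (T x) (T y) ≤
        ρ (max (dist (S x) (S y)) (max (dist (S x) (T x)) (max (dist (S y) (T y))
            (max (dist (S x) (T y)) (dist (S y) (T x)))))))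
    (hx0 : ∃ x₀, S x₀ ≤ T x₀)
    (hE : OBarComplete E)
    (hScont : SOBarContinuous T S)
    (hwc : WeaklyCompatible T S)
    (htot : CoincTotallyOrdered T S)
    (hcmp : ComparableMap T ∨ ComparableMap S) :
    ∃ z, S z = z ∧ T z = z ∧ (∀ w, S w = w → T w = w → w = z) ∧
      ∀ x : ℕ → X, S (x 0) ≤ T (x 0) → (∀ n, S (x (n + 1)) = T (x n)) →
        Tendsto (fun n => T (x n)) atTop (𝓝 z) := by
    classical
  have hρ1 := hρ.1
  have hρ2 := hρ.2
  -- uniqueness among common fixed points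
  have huniq : ∀ a b : X, S a = a → T a = a → S b = b → T b = b → a = b := by
    have keyle : ∀ p q : X, S p = p → T p = p → S q = q → T q = q → p ≤ q → p = q := by
      intro p q hp1 hp2 hq1 hq2 hpq
      have h := hcontr p q (by rw [hp1, hq1]; exact hpq)
      rw [hp1, hp2, hq1, hq2, dist_self, dist_self, dist_comm q p] at h
      rw [max_pattern' (dist p q) dist_nonneg] at h
      exact dist_eq_zero.mp (compFn_dist_zero' hρ1 dist_nonneg h)
    intro a b ha1 ha2 hb1 hb2
    rcases htot a b (by rw [ha1, ha2]) (by rw [hb1, hb2]) with h | h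
    · exact keyle a b ha1 ha2 hb1 hb2 h
    · exact (keyle b a hb1 hb2 ha1 ha2 h).symm
  -- any coincidence point yields that T u is a common fixed point
  have hfixof : ∀ u : X, S u = T u → S (T u) = T u ∧ T (T u) = T u := by
    intro u hu
    have hv2 : S (T u) = T (T u) := by
      have h := hwc u hu
      rw [hu] at h
      exact h
    have hcuv : CmpRel (S u) (S (T u)) := by
      have hcv : CmpRel u (T u) := htot u (T u) hu hv2
      rcases hcmp with hT | hS
      · rw [hu, hv2]
        exact hT u (T u) hcv
      · exact hS u (T u) hcv
    have hD : dist (T u) (T (T u)) = 0 := by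
      rcases hcuv with h1 | h1
      · have h := hcontr u (T u) h1
        rw [hu, hv2, dist_self, dist_self, dist_comm (T (T u)) (T u)] at h
        rw [max_pattern' _ dist_nonneg] at h
        exact compFn_dist_zero' hρ1 dist_nonneg h
      · have h := hcontr (T u) u h1
        rw [hu, hv2, dist_self, dist_self, dist_comm (T u) (T (T u))] at h
        rw [max_pattern' _ dist_nonneg] at h
        rw [dist_comm]
        exact compFn_dist_zero' hρ1 dist_nonneg h
    have hTv : T (T u) = T u := (dist_eq_zero.mp hD).symm
    exact ⟨by rw [hv2, hTv], hTv⟩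
  -- the main convergence lemma for T-S-sequences
  have key : ∀ x : ℕ → X, S (x 0) ≤ T (x 0) → (∀ n, S (x (n + 1)) = T (x n)) →
      ∃ v, S v = v ∧ T v = v ∧ Tendsto (fun n => T (x n)) atTop (𝓝 v) := by
    intro x hini hrec
    set y : ℕ → X := fun n => T (x n) with hy
    have hstep : ∀ n, S (x n) ≤ S (x (n + 1)) := by
      intro n
      induction n with
      | zero => exact hini.trans_eq (hrec 0).symm
      | succ n ih =>
        calc S (x (n + 1)) = T (x n) := hrec n
          _ ≤ T (x (n + 1)) := hTS _ _ ih
          _ = S (x (n + 2)) := (hrec (n + 1)).symm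
    have hmono : Monotone fun n => S (x n) := monotone_nat_of_le_succ hstep
    have ymono : Monotone y := by
      intro a b hab
      have h : S (x (a + 1)) ≤ S (x (b + 1)) := hmono (Nat.succ_le_succ hab)
      rw [hrec a, hrec b] at h
      exact h
    have hC : ∀ i j, i ≤ j → dist (y (i + 1)) (y (j + 1)) ≤
        ρ (max (dist (y i) (y j)) (max (dist (y i) (y (i + 1))) (max (dist (y j) (y (j + 1)))
          (max (dist (y i) (y (j + 1))) (dist (y j) (y (i + 1))))))) := by
      intro i j hij
      have h := hcontr (x (i + 1)) (x (j + 1)) (hmono (Nat.succ_le_succ hij))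
      rw [hrec i, hrec j] at h
      exact h
    have hdle : ∀ n, dist (y (n + 1)) (y (n + 2)) ≤ ρ (2 * dist (y n) (y (n + 1))) := by
      intro n
      have h := hC n (n + 1) (Nat.le_succ n)
      rw [dist_self] at h
      set a := dist (y n) (y (n + 1)) with ha
      set b := dist (y (n + 1)) (y (n + 2)) with hb
      have ha0 : (0:ℝ) ≤ a := dist_nonneg
      have hb0 : (0:ℝ) ≤ b := dist_nonneg
      have htri : dist (y n) (y (n + 2)) ≤ a + b := dist_triangle _ _ _
      have hM0 : (0:ℝ) ≤ max a (max a (max b (max (dist (y n) (y (n + 2))) 0))) :=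
        ha0.trans (le_max_left _ _)
      rcases le_total b a with hba | hba
      · have hM : max a (max a (max b (max (dist (y n) (y (n + 2))) 0))) ≤ 2 * a := by
          refine max_le (by linarith) (max_le (by linarith) (max_le (by linarith)
            (max_le (by linarith) (by linarith))))
        exact h.trans (hρ1.2.1 _ _ hM0 hM)
      · have hM : max a (max a (max b (max (dist (y n) (y (n + 2))) 0))) ≤ 2 * b := by
          refine max_le (by linarith) (max_le (by linarith) (max_le (by linarith)
            (max_le (by linarith) (by linarith))))
        have hbb : b ≤ ρ (2 * b) := h.trans (hρ1.2.1 _ _ hM0 hM)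
        have hb00 : b = 0 := compFn_dist_zero' hρ2 hb0 hbb
        rw [hb00]
        exact hρ1.1 _ (by linarith)
    have hd0 : Tendsto (fun n => dist (y n) (y (n + 1))) atTop (𝓝 0) :=
      compFn_seq_tendsto' hρ2 _ (fun _ => dist_nonneg) hdle
    have hcauchy : CauchySeq y := by
      rw [Metric.cauchySeq_iff]
      by_contra hcon
      push_neg at hcon
      obtain ⟨ε, hε, H⟩ := hcon
      have hρε := compFn_lt' hρ1 hε
      set c := ε - ρ ε with hcdef
      have hc0 : 0 < c := by simp only [hcdef]; linarith
      have hct : ContinuousWithinAt ρ (Set.Ici 0) ε := hρc ε (le_of_lt hε)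
      rw [Metric.continuousWithinAt_iff] at hct
      obtain ⟨δ, hδ0, hδ⟩ := hct (c / 3) (by linarith)
      have hsmall : ∀ᶠ n in atTop,
          dist (y n) (y (n + 1)) < min ε (min (δ / 3) (c / 6)) :=
        hd0.eventually_lt_const (by positivity)
      obtain ⟨K, hK⟩ := eventually_atTop.mp hsmall
      obtain ⟨m, hm, n, hn, hdist⟩ := H K
      have main : ∀ a b : ℕ, K ≤ b → b < a → ε ≤ dist (y a) (y b) → False := by
        intro a b hKb hba hab
        have hex : ∃ j, b < j ∧ ε ≤ dist (y j) (y b) := ⟨a, hba, hab⟩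
        obtain ⟨hbm', hεm'⟩ := Nat.find_spec hex
        set m' := Nat.find hex with hm'def
        have hmin : ∀ j, j < m' → ¬(b < j ∧ ε ≤ dist (y j) (y b)) :=
          fun j hj => Nat.find_min hex hj
        have hb2 : b + 2 ≤ m' := by
          by_contra h2
          have hbe : m' = b + 1 := by omega
          rw [hbe, dist_comm] at hεm'
          have hlt : dist (y b) (y (b + 1)) < ε :=
            lt_of_lt_of_le (hK b hKb) (min_le_left _ _)
          linarith
        set p := m' - 1 with hpdef
        have hpm : m' = p + 1 := by omega
        have hKp : K ≤ p := by omega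
        have hbp : b < p := by omega
        have hplt : dist (y p) (y b) < ε := by
          have h := hmin p (by omega)
          push_neg at h
          exact h hbp
        have hdb := hK b hKb
        have hdm := hK m' (by omega)
        have hdp := hK p hKp
        have hdbδ : dist (y b) (y (b + 1)) < δ / 3 :=
          lt_of_lt_of_le hdb ((min_le_right _ _).trans (min_le_left _ _))
        have hdbc : dist (y b) (y (b + 1)) < c / 6 :=
          lt_of_lt_of_le hdb ((min_le_right _ _).trans (min_le_right _ _))
        have hdmδ : dist (y m') (y (m' + 1)) < δ / 3 :=
          lt_of_lt_of_le hdm ((min_le_right _ _).trans (min_le_left _ _))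
        have hdmc : dist (y m') (y (m' + 1)) < c / 6 :=
          lt_of_lt_of_le hdm ((min_le_right _ _).trans (min_le_right _ _))
        have hdpδ : dist (y p) (y (p + 1)) < δ / 3 :=
          lt_of_lt_of_le hdp ((min_le_right _ _).trans (min_le_left _ _))
        have hG : ε ≤ dist (y b) (y m') := by rwa [dist_comm]
        have hGlt : dist (y b) (y m') < ε + δ / 3 := by
          have h1 : dist (y b) (y m') ≤ dist (y b) (y p) + dist (y p) (y m') :=
            dist_triangle _ _ _
          have h2 : dist (y b) (y p) < ε := by rwa [dist_comm]
          have h3 : dist (y p) (y m') < δ / 3 := by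
            rw [hpm]; exact hdpδ
          linarith
        have h := hC b m' (by omega)
        set G := dist (y b) (y m') with hGdef
        set db := dist (y b) (y (b + 1)) with hdbdef
        set dm := dist (y m') (y (m' + 1)) with hdmdef
        set M := max G (max db (max dm
          (max (dist (y b) (y (m' + 1))) (dist (y m') (y (b + 1)))))) with hMdef
        have hdb0 : (0:ℝ) ≤ db := dist_nonneg
        have hdm0 : (0:ℝ) ≤ dm := dist_nonneg
        have htr1 : dist (y b) (y (m' + 1)) ≤ G + dm := dist_triangle _ _ _
        have htr2 : dist (y m') (y (b + 1)) ≤ G + db := by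
          have := dist_triangle (y m') (y b) (y (b + 1))
          rw [dist_comm (y m') (y b)] at this
          exact this
        have hMub : M < ε + δ := by
          refine max_lt (by linarith) (max_lt (by linarith) (max_lt (by linarith)
            (max_lt (by linarith) (by linarith))))
        have hMlb : ε ≤ M := hG.trans (le_max_left _ _)
        have hM0 : M ∈ Set.Ici (0:ℝ) := le_trans hε.le hMlb
        have hMd : dist M ε < δ := by
          rw [Real.dist_eq, abs_of_nonneg (by linarith)]
          linarith
        have hρM := hδ hM0 hMd
        rw [Real.dist_eq] at hρM
        have hρM' : ρ M < ρ ε + c / 3 := by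
          have := abs_lt.mp hρM
          linarith [this.2]
        have hlow : G ≤ db + dist (y (b + 1)) (y (m' + 1)) + dm := by
          have h4 := dist_triangle4 (y b) (y (b + 1)) (y (m' + 1)) (y m')
          rw [dist_comm (y (m' + 1)) (y m')] at h4
          exact h4
        have hfin : dist (y (b + 1)) (y (m' + 1)) ≤ ρ M := h
        simp only [hcdef] at hdbc hdmc hρM' hc0
        linarith
      rcases lt_trichotomy n m with h | h | h
      · exact main m n hn h hdist
      · rw [h, dist_self] at hdist; linarith
      · exact main n m hm h (by rwa [dist_comm] at hdist)
    obtain ⟨z, hzE, hyz⟩ := hE y (fun n => hTE (x n)) ymono hcauchy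
    obtain ⟨u, hSu⟩ := hES hzE
    have hfun : (fun n => S (x (n + 1))) = fun n => y n := funext hrec
    have hmono' : Monotone fun n => S (x (n + 1)) := by
      rw [hfun]; exact ymono
    have htend : Tendsto (fun n => S (x (n + 1))) atTop (𝓝 (S u)) := by
      rw [hfun, hSu]; exact hyz
    have hTu : Tendsto (fun n => T (x (n + 1))) atTop (𝓝 (T u)) :=
      hScont (fun n => x (n + 1)) u hmono' htend
    have hshift : Tendsto (fun n => y (n + 1)) atTop (𝓝 z) :=
      hyz.comp (tendsto_add_atTop_nat 1)
    have hTuz : T u = z := tendsto_nhds_unique hTu hshift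
    have hcoin : S u = T u := by rw [hSu, hTuz]
    obtain ⟨hv1, hv2⟩ := hfixof u hcoin
    exact ⟨T u, hv1, hv2, by rw [hTuz]; exact hyz⟩
  -- build an actual T-S-sequence from x₀
  obtain ⟨x₀, hx₀⟩ := hx0
  have hpre : ∀ a : X, ∃ w, S w = T a := fun a => hES (hTE a)
  choose f hf using hpre
  have hrec0 : ∀ n, S ((fun n => f^[n] x₀) (n + 1)) = T ((fun n => f^[n] x₀) n) := by
    intro n
    simp only []
    rw [Function.iterate_succ_apply']
    exact hf _
  obtain ⟨v, hv1, hv2, hv3⟩ := key (fun n => f^[n] x₀) (by simpa using hx₀) hrec0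
  refine ⟨v, hv1, hv2, fun w hw1 hw2 => huniq w v hw1 hw2 hv1 hv2, ?_⟩
  intro x' h0 h1
  obtain ⟨v', a1, a2, a3⟩ := key x' h0 h1
  rwa [huniq v' v a1 a2 hv1 hv2] at a3
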